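/- With F nonempty and bounded and α > 0, a matrix X ∈ F(α) ∩ S^n_{++} maximizes log det over F(α) if and only if there exists y ∈ R^m with X^{-1} = A*(y). Moreover, if A is surjective then this y is unique. -/

import Mathlib

open Matrix Polynomial


lemma trace_eq_sum_eigen {n : ℕ} {A : Matrix (Fin n) (Fin n) ℝ} (hA : A.IsHermitian) :
    A.trace = ∑ i, hA.eigenvalues i := by
  nth_rewrite 1 [hA.spectral_theorem]
  rw [Unitary.conjStarAlgAut_apply]
  rw [Matrix.trace_mul_cycle]
  rw [show (star (hA.eigenvectorUnitary : Matrix (Fin n) (Fin n) ℝ)) *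
      (hA.eigenvectorUnitary : Matrix (Fin n) (Fin n) ℝ) = 1 from
    Matrix.mem_unitaryGroup_iff'.mp hA.eigenvectorUnitary.2, one_mul]
  simp [Matrix.trace_diagonal]

lemma det_le_exp_trace {n : ℕ} {M : Matrix (Fin n) (Fin n) ℝ} (hM : M.PosSemidef) :
    M.det ≤ Real.exp (M.trace - n) := by
  have hd : M.det = ∏ i, hM.1.eigenvalues i := by
    simpa using hM.1.det_eq_prod_eigenvalues
  have ht : M.trace = ∑ i, hM.1.eigenvalues i := trace_eq_sum_eigen hM.1
  rw [hd, ht]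
  calc ∏ i, hM.1.eigenvalues i ≤ ∏ i, Real.exp (hM.1.eigenvalues i - 1) := by
        apply Finset.prod_le_prod
        · intro i _; exact hM.eigenvalues_nonneg i
        · intro i _
          have := Real.add_one_le_exp (hM.1.eigenvalues i - 1)
          linarith
    _ = Real.exp (∑ i, (hM.1.eigenvalues i - 1)) := by rw [Real.exp_sum]
    _ = Real.exp (∑ i, hM.1.eigenvalues i - n) := by
        rw [Finset.sum_sub_distrib]
        simp

lemma quad_scale {n : ℕ} (A : Matrix (Fin n) (Fin n) ℝ) (c : ℝ) (x : Fin n → ℝ) :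
    (c • x) ⬝ᵥ (A *ᵥ (c • x)) = c^2 * (x ⬝ᵥ (A *ᵥ x)) := by
  rw [mulVec_smul, dotProduct_smul, smul_dotProduct]
  rw [smul_eq_mul, smul_eq_mul]; ring

lemma posdef_quad_lb {n : ℕ} {A : Matrix (Fin n) (Fin n) ℝ} (hA : A.PosDef) :
    ∃ c > 0, ∀ x : Fin n → ℝ, c * ‖x‖^2 ≤ x ⬝ᵥ (A *ᵥ x) := by
  rcases Nat.eq_zero_or_pos n with hn | hn
  · refine ⟨1, one_pos, fun x => ?_⟩
    subst hn
    have hx : x = 0 := Subsingleton.elim _ _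
    rw [hx]; norm_num [Matrix.empty_mulVec]
  · have hne : Nonempty (Fin n) := ⟨⟨0, hn⟩⟩
    have : Nontrivial (Fin n → ℝ) := Function.nontrivial
    set f : (Fin n → ℝ) → ℝ := fun x => x ⬝ᵥ (A *ᵥ x) with hf
    have hcont : Continuous f := by
      unfold f
      unfold dotProduct mulVec dotProduct
      fun_prop
    have hsph : (Metric.sphere (0 : Fin n → ℝ) 1).Nonempty :=
      NormedSpace.sphere_nonempty.mpr zero_le_one
    obtain ⟨x₀, hx₀mem, hx₀min⟩ := (isCompact_sphere (0 : Fin n → ℝ) 1).exists_isMinOn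
      hsph hcont.continuousOn
    have hx₀norm : ‖x₀‖ = 1 := by simpa using hx₀mem
    have hx₀ne : x₀ ≠ 0 := by
      intro h; rw [h, norm_zero] at hx₀norm; exact one_ne_zero hx₀norm.symm
    have hc : 0 < f x₀ := by
      have := hA.dotProduct_mulVec_pos hx₀ne
      simpa using this
    refine ⟨f x₀, hc, fun x => ?_⟩
    by_cases hx : x = 0
    · rw [hx]; simp
    · have hxn : 0 < ‖x‖ := norm_pos_iff.mpr hx
      set u : Fin n → ℝ := ‖x‖⁻¹ • x with hu
      have hunorm : ‖u‖ = 1 := by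
        rw [hu, norm_smul]
        simp [abs_of_pos (inv_pos.mpr hxn), inv_mul_cancel₀ (ne_of_gt hxn)]
      have hmin := hx₀min (Metric.mem_sphere.mpr (by simpa using hunorm))
      have hxu : x = ‖x‖ • u := by
        rw [hu, smul_smul, mul_inv_cancel₀ (ne_of_gt hxn), one_smul]
      have hfx : x ⬝ᵥ (A *ᵥ x) = ‖x‖^2 * (u ⬝ᵥ (A *ᵥ u)) := by
        conv_lhs => rw [hxu]
        exact quad_scale A ‖x‖ u
      rw [show f x₀ * ‖x‖^2 = ‖x‖^2 * f x₀ by ring, hfx]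
      exact mul_le_mul_of_nonneg_left hmin (sq_nonneg ‖x‖)

lemma quad_abs_bound {n : ℕ} (H : Matrix (Fin n) (Fin n) ℝ) (x : Fin n → ℝ) :
    |x ⬝ᵥ (H *ᵥ x)| ≤ (∑ i, ∑ j, |H i j|) * ‖x‖^2 := by
  have hexp : x ⬝ᵥ (H *ᵥ x) = ∑ i, ∑ j, x i * (H i j * x j) := by
    simp [dotProduct, mulVec, Finset.mul_sum]
  rw [hexp, Finset.sum_mul]
  refine (Finset.abs_sum_le_sum_abs _ _).trans (Finset.sum_le_sum fun i _ => ?_)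
  rw [Finset.sum_mul]
  refine (Finset.abs_sum_le_sum_abs _ _).trans (Finset.sum_le_sum fun j _ => ?_)
  rw [abs_mul, abs_mul]
  have hxi : |x i| ≤ ‖x‖ := by
    simpa [Real.norm_eq_abs] using norm_le_pi_norm x i
  have hxj : |x j| ≤ ‖x‖ := by
    simpa [Real.norm_eq_abs] using norm_le_pi_norm x j
  calc |x i| * (|H i j| * |x j|) = |x i| * |x j| * |H i j| := by ring
    _ ≤ ‖x‖ * ‖x‖ * |H i j| := by
        apply mul_le_mul_of_nonneg_right _ (abs_nonneg _)
        exact mul_le_mul hxi hxj (abs_nonneg _) (norm_nonneg _)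
    _ = |H i j| * ‖x‖^2 := by ring

lemma posdef_perturb {n : ℕ} {A : Matrix (Fin n) (Fin n) ℝ} (hA : A.PosDef)
    (H : Matrix (Fin n) (Fin n) ℝ) (hH : H.IsHermitian)
    (hquad : ∃ c > 0, ∀ x : Fin n → ℝ, c * ‖x‖^2 ≤ x ⬝ᵥ (A *ᵥ x)) :
    ∃ ε > 0, ∀ t : ℝ, |t| < ε → (A + t • H).PosDef := by
  obtain ⟨c, hc, hcb⟩ := hquad
  set K : ℝ := (∑ i, ∑ j, |H i j|) + 1 with hK
  have hK0 : 0 < K := by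
    have : 0 ≤ ∑ i, ∑ j, |H i j| :=
      Finset.sum_nonneg fun i _ => Finset.sum_nonneg fun j _ => abs_nonneg _
    linarith
  refine ⟨c / K, div_pos hc hK0, fun t ht => ?_⟩
  refine posDef_iff_dotProduct_mulVec.mpr ?_
  constructor
  · have h1 : (t • H).IsHermitian := by
      unfold Matrix.IsHermitian at hH ⊢
      rw [conjTranspose_smul, hH]
      simp
    exact hA.1.add h1
  · intro x hx
    have hxn : 0 < ‖x‖ := norm_pos_iff.mpr hx
    have hb := quad_abs_bound H x
    have key : x ⬝ᵥ ((A + t • H) *ᵥ x) = x ⬝ᵥ (A *ᵥ x) + t * (x ⬝ᵥ (H *ᵥ x)) := by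
      rw [add_mulVec, dotProduct_add, smul_mulVec, dotProduct_smul, smul_eq_mul]
    have hstar : star x = x := by simp
    rw [hstar, key]
    have h2 : |t * (x ⬝ᵥ (H *ᵥ x))| ≤ |t| * ((K - 1) * ‖x‖^2) := by
      rw [abs_mul]
      exact mul_le_mul_of_nonneg_left (by simpa [hK] using hb) (abs_nonneg t)
    have h3 : |t| * ((K - 1) * ‖x‖^2) < c * ‖x‖^2 := by
      have hlt : |t| * K < c := by
        rw [← lt_div_iff₀ hK0] at *
        exact ht
      have hKm : 0 ≤ K - 1 → True := fun _ => trivial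
      nlinarith [sq_nonneg ‖x‖, abs_nonneg t, mul_pos (mul_pos hxn hxn) hc]
    have h4 := hcb x
    have := neg_abs_le (t * (x ⬝ᵥ (H *ᵥ x)))
    nlinarith [mul_pos (mul_pos hxn hxn) hc]

lemma det_perturb {n : ℕ} {X H : Matrix (Fin n) (Fin n) ℝ} (hX : X.PosDef)
    (hc : (X⁻¹ * H).trace ≠ 0) (ε : ℝ) (hε : 0 < ε) :
    ∃ t : ℝ, |t| < ε ∧ X.det < (X + t • H).det := by
  set K : Matrix (Fin n) (Fin n) ℝ := X⁻¹ * H with hKdef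
  set c : ℝ := K.trace with hcdef
  have hdet0 : X.det ≠ 0 := ne_of_gt hX.det_pos
  have hfac : ∀ t : ℝ, X + t • H = X * (1 + t • K) := by
    intro t
    rw [mul_add, mul_one, mul_smul_comm, hKdef, ← mul_assoc,
      Matrix.mul_nonsing_inv X (isUnit_iff_ne_zero.mpr hdet0), one_mul]
  set P : Polynomial ℝ := (det (1 + (Polynomial.X : ℝ[X]) • K.map C)).divX.divX with hP
  have hdetexp : ∀ t : ℝ, (1 + t • K).det = 1 + c * t + P.eval t * t^2 :=
    fun t => Matrix.det_one_add_smul t K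
  set g : ℝ → ℝ := fun t => P.eval t * t with hg
  have hgcont : Continuous g := by
    exact (Polynomial.continuous P).mul continuous_id
  have hg0 : g 0 = 0 := by simp [hg]
  have hev : ∀ᶠ t in nhds (0:ℝ), |g t| < |c| / 2 := by
    have h1 : Filter.Tendsto g (nhds 0) (nhds 0) := by
      simpa [hg0] using hgcont.tendsto 0
    have h2 := Metric.tendsto_nhds.mp h1 (|c|/2) (by positivity)
    filter_upwards [h2] with t ht
    simpa [Real.dist_eq] using ht
  obtain ⟨δ, hδ, hδb⟩ := Metric.eventually_nhds_iff.mp hev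
  set t : ℝ := (if 0 < c then 1 else -1) * (min δ ε / 2) with htdef
  have hmin : 0 < min δ ε / 2 := by positivity
  have habs : |t| = min δ ε / 2 := by
    rw [htdef, abs_mul]
    split_ifs <;> simp [abs_of_pos hmin]
  have htε : |t| < ε := by
    rw [habs]; exact lt_of_le_of_lt (by linarith [min_le_right δ ε] : min δ ε / 2 ≤ ε/2) (by linarith)
  refine ⟨t, htε, ?_⟩
  have htδ : dist t 0 < δ := by
    rw [Real.dist_eq, sub_zero, habs]
    linarith [min_le_left δ ε]
  have hgt := hδb htδ
  have hpos : 0 < t * (c + g t) := by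
    rcases lt_or_gt_of_ne hc with hneg | hposc
    · have ht' : t = -(min δ ε / 2) := by rw [htdef, if_neg (by linarith)]; ring
      have : c + g t < c/2 := by
        have := abs_lt.mp hgt
        have hcabs : |c| = -c := abs_of_neg hneg
        linarith [this.2]
      have h2 : c + g t < 0 := by linarith
      rw [ht'] at h2 ⊢
      exact mul_pos_of_neg_of_neg (by linarith) h2
    · have ht' : t = min δ ε / 2 := by rw [htdef, if_pos hposc]; ring
      have : c/2 < c + g t := by
        have := abs_lt.mp hgt
        have hcabs : |c| = c := abs_of_pos hposc
        linarith [this.1]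
      have h2 : 0 < c + g t := by linarith
      rw [ht'] at h2 ⊢
      exact mul_pos hmin h2
  rw [hfac t, det_mul, hdetexp t]
  have : 1 + c * t + P.eval t * t^2 = 1 + t * (c + g t) := by rw [hg]; ring
  rw [this]
  nth_rewrite 1 [show X.det = X.det * 1 by ring]
  exact mul_lt_mul_of_pos_left (by linarith) hX.det_pos

lemma trace_sum_smul_mul {n m : ℕ} (y : Fin m → ℝ) (S : Fin m → Matrix (Fin n) (Fin n) ℝ)
    (H : Matrix (Fin n) (Fin n) ℝ) :
    ((∑ i, y i • S i) * H).trace = ∑ i, y i * (S i * H).trace := by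
  rw [Finset.sum_mul, trace_sum]
  congr 1; funext i
  rw [smul_mul_assoc, trace_smul, smul_eq_mul]

lemma eq_zero_of_trace_mul_eq_zero {n : ℕ} (M : Matrix (Fin n) (Fin n) ℝ)
    (h : ∀ H : Matrix (Fin n) (Fin n) ℝ, (M * H).trace = 0) : M = 0 := by
  have h1 : (M * Mᵀ).trace = ∑ i, ∑ j, (M i j)^2 := by
    simp [Matrix.trace, Matrix.diag, Matrix.mul_apply, sq]
  have h2 := h Mᵀ
  rw [h1] at h2
  ext i j
  have := (Finset.sum_eq_zero_iff_of_nonneg (fun i _ =>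
    Finset.sum_nonneg (fun j _ => sq_nonneg (M i j)))).mp h2 i (Finset.mem_univ i)
  have := (Finset.sum_eq_zero_iff_of_nonneg (fun j _ => sq_nonneg (M i j))).mp this j
    (Finset.mem_univ j)
  simpa using pow_eq_zero_iff (n := 2) (by norm_num) |>.mp this

lemma trace_mul_transpose_symm {n : ℕ} {S H : Matrix (Fin n) (Fin n) ℝ} (hS : S.IsSymm) :
    (S * Hᵀ).trace = (S * H).trace := by
  conv_lhs => rw [← Matrix.trace_transpose, Matrix.transpose_mul, Matrix.transpose_transpose,
    Matrix.trace_mul_comm, hS]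


theorem stmt7 {n m : ℕ} (S : Fin m → Matrix (Fin n) (Fin n) ℝ)
    (hS : ∀ i, (S i).IsSymm) (b : Fin m → ℝ)
    (hsurj : Function.Surjective
      (fun X : Matrix (Fin n) (Fin n) ℝ => fun i => (S i * X).trace))
    (F : Set (Matrix (Fin n) (Fin n) ℝ))
    (hF : F = {X | X.PosSemidef ∧ ∀ i, (S i * X).trace = b i})
    (hne : F.Nonempty)
    (hbdd : ∃ M : ℝ, ∀ X ∈ F, ∀ i j, |X i j| ≤ M)
    (α : ℝ) (hα : 0 < α)
    (Fα : Set (Matrix (Fin n) (Fin n) ℝ))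
    (hFα : Fα = {X | X.PosSemidef ∧ ∀ i, (S i * X).trace = b i + α * (S i).trace})
    (X : Matrix (Fin n) (Fin n) ℝ) (hX : X ∈ Fα) (hXpd : X.PosDef) :
    (∀ Y ∈ Fα, Y.det ≤ X.det) ↔ ∃! y : Fin m → ℝ, X⁻¹ = ∑ i, y i • S i := by
  have hXmem : X.PosSemidef ∧ ∀ i, (S i * X).trace = b i + α * (S i).trace := by
    rw [hFα] at hX; exact hX
  have hdet0 : X.det ≠ 0 := ne_of_gt hXpd.det_pos
  have hXinvX : X⁻¹ * X = 1 := nonsing_inv_mul X (isUnit_iff_ne_zero.mpr hdet0)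
  have hXinvpd : X⁻¹.PosDef := hXpd.inv
  have hXinvsymm : X⁻¹.IsSymm := by
    rw [Matrix.IsSymm, ← conjTranspose_eq_transpose_of_trivial, hXinvpd.1]
  constructor
  · intro hmax
    -- the key first-order condition
    have hker : ∀ H : Matrix (Fin n) (Fin n) ℝ,
        (∀ i, (S i * H).trace = 0) → (X⁻¹ * H).trace = 0 := by
      intro H hLH
      set Hs : Matrix (Fin n) (Fin n) ℝ := (1/2 : ℝ) • (H + Hᵀ) with hHsdef
      have hHs_symm : Hs.IsSymm := by
        rw [Matrix.IsSymm, hHsdef, transpose_smul, transpose_add, transpose_transpose,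
          add_comm]
      have hHs_herm : Hs.IsHermitian := by
        rw [Matrix.IsHermitian, conjTranspose_eq_transpose_of_trivial]
        exact hHs_symm
      have hsplit : ∀ A : Matrix (Fin n) (Fin n) ℝ, A.IsSymm →
          (A * Hs).trace = (A * H).trace := by
        intro A hA
        rw [hHsdef, mul_smul_comm, trace_smul, mul_add, trace_add,
          trace_mul_transpose_symm hA]
        simp; ring
      have hHsL : ∀ i, (S i * Hs).trace = 0 := fun i => by
        rw [hsplit (S i) (hS i), hLH i]
      by_contra hne0
      have hcne : (X⁻¹ * Hs).trace ≠ 0 := by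
        rw [hsplit X⁻¹ hXinvsymm]; exact hne0
      obtain ⟨ε, hε, hpd⟩ := posdef_perturb hXpd Hs hHs_herm (posdef_quad_lb hXpd)
      obtain ⟨t, htε, hdet⟩ := det_perturb hXpd hcne ε hε
      have hmem : X + t • Hs ∈ Fα := by
        rw [hFα]
        refine ⟨(hpd t htε).posSemidef, fun i => ?_⟩
        rw [mul_add, trace_add, mul_smul_comm, trace_smul, hHsL i, hXmem.2 i]
        simp
      exact absurd (hmax _ hmem) (not_le.mpr hdet)
    -- linear algebra: factor the functional through the constraints
    let L : Matrix (Fin n) (Fin n) ℝ →ₗ[ℝ] (Fin m → ℝ) :=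
      { toFun := fun H => fun i => (S i * H).trace
        map_add' := by intro A B; funext i; simp [mul_add]
        map_smul' := by intro c A; funext i; simp [mul_smul_comm] }
    let f : Matrix (Fin n) (Fin n) ℝ →ₗ[ℝ] ℝ :=
      { toFun := fun H => (X⁻¹ * H).trace
        map_add' := by intro A B; simp [mul_add]
        map_smul' := by intro c A; simp [mul_smul_comm] }
    have hLsurj : LinearMap.range L = ⊤ := LinearMap.range_eq_top.mpr hsurj
    obtain ⟨g, hg⟩ := L.exists_rightInverse_of_surjective hLsurj
    set y : Fin m → ℝ := fun i => f (g (Pi.single i 1)) with hydef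
    have hgL : ∀ v : Fin m → ℝ, L (g v) = v := fun v => by
      have := LinearMap.congr_fun hg v
      simpa using this
    have hv : ∀ v : Fin m → ℝ, v = ∑ i, v i • (Pi.single i (1:ℝ) : Fin m → ℝ) := by
      intro v; funext j
      simp [Finset.sum_apply, Pi.single_apply]
    have hfactor : ∀ H : Matrix (Fin n) (Fin n) ℝ,
        (X⁻¹ * H).trace = ∑ i, (S i * H).trace * y i := by
      intro H
      have h0 : L (H - g (L H)) = 0 := by rw [map_sub, hgL, sub_self]
      have h1 : f (H - g (L H)) = 0 := by
        apply hker
        intro i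
        exact congrFun h0 i
      have h3 := map_sub f H (g (L H))
      rw [h1] at h3
      have h2 : f H = f (g (L H)) := by linarith [h3.symm ▸ (rfl : (0:ℝ) = 0)]
      have h4 : f (g (L H)) = ∑ i, L H i * y i := by
        conv_lhs => rw [hv (L H)]
        rw [map_sum, map_sum]
        refine Finset.sum_congr rfl fun i _ => ?_
        rw [_root_.map_smul, _root_.map_smul, smul_eq_mul]
      exact h2.trans h4
    have hyX : X⁻¹ = ∑ i, y i • S i := by
      have hz : ∀ H, ((X⁻¹ - ∑ i, y i • S i) * H).trace = 0 := by
        intro H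
        rw [sub_mul, Matrix.trace_sub, trace_sum_smul_mul, hfactor H, sub_eq_zero]
        exact Finset.sum_congr rfl fun i _ => mul_comm _ _
      exact sub_eq_zero.mp (eq_zero_of_trace_mul_eq_zero _ hz)
    refine ⟨y, hyX, ?_⟩
    intro z hz
    have hdz : ∑ i, (z i - y i) • S i = 0 := by
      simp only [sub_smul, Finset.sum_sub_distrib, ← hz, ← hyX, sub_self]
    obtain ⟨W, hW⟩ := hsurj (fun i => z i - y i)
    have h6 : ∑ i, (z i - y i) * (S i * W).trace = 0 := by
      rw [← trace_sum_smul_mul, hdz, Matrix.zero_mul, trace_zero]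
    have h7 : ∑ i, (z i - y i)^2 = 0 := by
      rw [← h6]
      refine Finset.sum_congr rfl fun i _ => ?_
      rw [show (S i * W).trace = z i - y i from congrFun hW i]
      ring
    have h8 := (Finset.sum_eq_zero_iff_of_nonneg (fun i _ => sq_nonneg _)).mp h7
    funext j
    have := h8 j (Finset.mem_univ j)
    have := pow_eq_zero_iff (n := 2) (by norm_num) |>.mp this
    linarith [sub_eq_zero.mp this]
  · rintro ⟨y, hy, -⟩ Y hYmem
    rw [hFα] at hYmem
    have htr : (X⁻¹ * Y).trace = (Fintype.card (Fin n) : ℝ) := by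
      calc (X⁻¹ * Y).trace = ∑ i, y i * (S i * Y).trace := by rw [hy, trace_sum_smul_mul]
        _ = ∑ i, y i * (S i * X).trace := by
            refine Finset.sum_congr rfl fun i _ => ?_
            rw [hYmem.2 i, hXmem.2 i]
        _ = (X⁻¹ * X).trace := by rw [hy, trace_sum_smul_mul]
        _ = (Fintype.card (Fin n) : ℝ) := by rw [hXinvX, trace_one]
    set hs : X⁻¹.PosSemidef := hXinvpd.posSemidef with hhs
    open scoped MatrixOrder in
    set R : Matrix (Fin n) (Fin n) ℝ := CFC.sqrt X⁻¹ with hR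
    open scoped MatrixOrder in
    have hRR : R * R = X⁻¹ := CFC.sqrt_mul_sqrt_self X⁻¹ hs.nonneg
    open scoped MatrixOrder in
    have hRherm : R.IsHermitian := (CFC.sqrt_nonneg X⁻¹).posSemidef.1
    have hMpsd : (R * Y * R).PosSemidef := by
      have := hYmem.1.mul_mul_conjTranspose_same R
      rwa [hRherm.eq] at this
    have hMtr : (R * Y * R).trace = (Fintype.card (Fin n) : ℝ) := by
      rw [Matrix.trace_mul_cycle, hRR, htr]
    have hMdet : (R * Y * R).det = X⁻¹.det * Y.det := by
      rw [det_mul, det_mul, ← hRR, det_mul]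
      ring
    have hle := det_le_exp_trace hMpsd
    rw [hMtr, hMdet] at hle
    simp only [Fintype.card_fin, sub_self, Real.exp_zero] at hle
    have hXXi : X⁻¹.det * X.det = 1 := det_nonsing_inv_mul_det X (isUnit_iff_ne_zero.mpr hdet0)
    nlinarith [hXpd.det_pos, hXinvpd.det_pos]
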